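/- arXiv:1303.3053 — 2 statements merged into one kernel-verified Lean document; each statement's English description precedes it below -/
import Mathlib

section
/- Let S = {s₁, ..., s_t} ⊆ BS⁺(1,2) with t ≥ 2, where sᵢ = b^{mᵢ}·a^{xᵢ}, 1 ≤ m₁ < m₂ < ... < m_t, and the xᵢ are integers. If S generates a non-abelian subgroup, then |S²| ≥ 4|S| − 4. -/
open Pointwise

def BSRel (n : ℤ) : Set (FreeGroup Bool) :=
  {FreeGroup.of true * FreeGroup.of false * (FreeGroup.of false * FreeGroup.of true ^ n)⁻¹}

/-- The Baumslag–Solitar group `BS(1,n) = ⟨a, b ∣ a b = b aⁿ⟩`. -/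
abbrev BS (n : ℤ) : Type := PresentedGroup (BSRel n)

noncomputable instance (n : ℤ) : DecidableEq (BS n) := Classical.decEq _

/-- The generator `a` of `BS(1,n)`. -/
def bsa (n : ℤ) : BS n := PresentedGroup.of true

/-- The generator `b` of `BS(1,n)`. -/
def bsb (n : ℤ) : BS n := PresentedGroup.of false

/-! representation -/

noncomputable def permA : Equiv.Perm ℚ := Equiv.addRight (1 : ℚ)
noncomputable def permB : Equiv.Perm ℚ := Equiv.mulLeft₀ (2⁻¹ : ℚ) (by norm_num)

noncomputable def bsrep : BS 2 →* Equiv.Perm ℚ :=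
  PresentedGroup.toGroup (f := fun c => if c then permA else permB)
    (by
      rintro r ⟨rfl⟩
      simp only [FreeGroup.lift_apply_of, map_mul, map_inv, map_pow]
      simp only [if_pos, if_neg]
      rw [mul_inv_eq_one]
      ext q
      simp [permA, permB, Equiv.Perm.mul_apply, Equiv.mulLeft₀, zpow_two]
      ring)

lemma bsrep_a : bsrep (bsa 2) = permA := by
  simp [bsrep, bsa, PresentedGroup.toGroup.of]

lemma bsrep_b : bsrep (bsb 2) = permB := by
  simp [bsrep, bsb, PresentedGroup.toGroup.of]

lemma permA_inv (q : ℚ) : permA⁻¹ q = q - 1 := by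
  have : permA (q - 1) = q := by simp [permA]
  conv_lhs => rw [← this]
  simp

lemma permA_zpow (x : ℤ) : ∀ q : ℚ, (permA ^ x) q = q + x := by
  induction x using Int.induction_on with
  | zero => simp
  | succ n ih =>
      intro q
      rw [zpow_add, zpow_one, Equiv.Perm.mul_apply, ih]
      simp [permA]; push_cast; ring
  | pred n ih =>
      intro q
      rw [sub_eq_add_neg, zpow_add, zpow_neg_one, Equiv.Perm.mul_apply, ih, permA_inv]
      push_cast; ring

lemma permB_pow (m : ℕ) : ∀ q : ℚ, (permB ^ m) q = q / 2 ^ m := by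
  induction m with
  | zero => simp
  | succ n ih =>
      intro q
      rw [pow_succ, Equiv.Perm.mul_apply, ih]
      simp [permB, Equiv.mulLeft₀]; ring

lemma bsrep_elt (mm : ℕ) (xx : ℤ) (q : ℚ) :
    bsrep (bsb 2 ^ mm * bsa 2 ^ xx) q = (q + xx) / 2 ^ mm := by
  rw [map_mul, map_pow, map_zpow, bsrep_a, bsrep_b, Equiv.Perm.mul_apply, permA_zpow, permB_pow]

/-! group identities -/

lemma bs_rel : bsa 2 * bsb 2 = bsb 2 * bsa 2 ^ 2 := by
  have h : (PresentedGroup.mk (BSRel 2))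
      (FreeGroup.of true * FreeGroup.of false * (FreeGroup.of false * FreeGroup.of true ^ (2:ℤ))⁻¹) = 1 := by
    apply (QuotientGroup.eq_one_iff _).mpr
    exact Subgroup.subset_normalClosure rfl
  rw [map_mul, map_inv, mul_inv_eq_one] at h
  have h2 : ∀ w : FreeGroup Bool, PresentedGroup.mk (BSRel 2) w = QuotientGroup.mk w := fun _ => rfl
  simpa [bsa, bsb, PresentedGroup.of, map_mul, map_zpow, zpow_two, sq] using h

lemma bs_conj : (bsb 2)⁻¹ * bsa 2 * bsb 2 = bsa 2 ^ 2 := by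
  rw [mul_assoc, bs_rel, ← mul_assoc, inv_mul_cancel, one_mul]

lemma bs_conj_zpow (x : ℤ) : (bsb 2)⁻¹ * bsa 2 ^ x * bsb 2 = bsa 2 ^ (2 * x) := by
  have h := conj_zpow (i := x) (a := (bsb 2)⁻¹) (b := bsa 2)
  simp only [inv_inv] at h
  rw [← h, bs_conj, ← zpow_natCast (bsa 2) 2, ← zpow_mul]
  norm_num [mul_comm]

lemma bs_pow_conj (mm : ℕ) (x : ℤ) :
    bsa 2 ^ x * bsb 2 ^ mm = bsb 2 ^ mm * bsa 2 ^ (2 ^ mm * x) := by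
  induction mm generalizing x with
  | zero => simp
  | succ n ih =>
      have key : ∀ y : ℤ, bsa 2 ^ y * bsb 2 = bsb 2 * bsa 2 ^ (2 * y) := by
        intro y; rw [← bs_conj_zpow]; group
      rw [pow_succ, ← mul_assoc, ih, mul_assoc, key, ← mul_assoc, ← pow_succ]
      congr 1
      rw [pow_succ]; ring_nf

lemma bs_normal_form (M N : ℕ) (X Y : ℤ) :
    (bsb 2 ^ M * bsa 2 ^ X) * (bsb 2 ^ N * bsa 2 ^ Y)
      = bsb 2 ^ (M + N) * bsa 2 ^ (2 ^ N * X + Y) := by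
  rw [mul_assoc, ← mul_assoc (bsa 2 ^ X), bs_pow_conj, pow_add]
  rw [zpow_add]; group

/-! injectivity gadget -/

noncomputable def bspsi : BS 2 → ℚ × ℚ := fun w => (bsrep w 1 - bsrep w 0, bsrep w 0)

def embNXQ : ℕ × ℤ → ℚ × ℚ := fun q => ((2 ^ q.1 : ℚ)⁻¹, (q.2 : ℚ) / 2 ^ q.1)

lemma embNXQ_inj : Function.Injective embNXQ := by
  rintro ⟨a, b⟩ ⟨c, d⟩ h
  simp only [embNXQ, Prod.mk.injEq, inv_inj] at h
  have hac : a = c := by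
    have := h.1
    have h2 : StrictMono (fun n : ℕ => (2:ℚ) ^ n) := fun _ _ hlt => by
      exact pow_lt_pow_right₀ one_lt_two hlt
    exact h2.injective this
  subst hac
  refine Prod.ext rfl ?_
  have := h.2
  field_simp at this
  exact_mod_cast this

lemma bspsi_prod (M N : ℕ) (X Y : ℤ) :
    bspsi ((bsb 2 ^ M * bsa 2 ^ X) * (bsb 2 ^ N * bsa 2 ^ Y))
      = embNXQ (M + N, 2 ^ N * X + Y) := by
  rw [bs_normal_form]
  simp only [bspsi, embNXQ, bsrep_elt]
  refine Prod.ext ?_ ?_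
  · show (1 + ((2 ^ N * X + Y : ℤ) : ℚ)) / 2 ^ (M + N) - (0 + ((2 ^ N * X + Y : ℤ) : ℚ)) / 2 ^ (M + N) = _
    field_simp
    ring
  · show (0 + ((2 ^ N * X + Y : ℤ) : ℚ)) / 2 ^ (M + N) = _
    rw [zero_add]

/-! the combinatorial core -/

noncomputable def lam (M : ℕ) (X : ℤ) : ℚ := (X : ℚ) / (2 ^ M - 1)

lemma two_le_pow {M : ℕ} (hM : 1 ≤ M) : (2 : ℚ) ≤ 2 ^ M := by
  calc (2:ℚ) = 2 ^ 1 := (pow_one 2).symm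
  _ ≤ 2 ^ M := by exact pow_le_pow_right₀ one_le_two hM

lemma pow_sub_one_ne {M : ℕ} (hM : 1 ≤ M) : (2 : ℚ) ^ M - 1 ≠ 0 := by
  have := two_le_pow hM; linarith

lemma lam_spec {M : ℕ} (X : ℤ) (hM : 1 ≤ M) : ((2:ℚ) ^ M - 1) * lam M X = X := by
  rw [lam, mul_div_cancel₀ _ (pow_sub_one_ne hM)]

lemma castX {M N : ℕ} (X Y : ℤ) (hM : 1 ≤ M) (hN : 1 ≤ N) :
    ((2 ^ N * X + Y : ℤ) : ℚ)
      = ((2:ℚ) ^ (M + N) - 2 ^ N) * lam M X + ((2:ℚ) ^ N - 1) * lam N Y := by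
  push_cast
  linear_combination (-(2:ℚ) ^ N) * lam_spec X hM - lam_spec Y hN

lemma idt {M N : ℕ} (X Y : ℤ) (hM : 1 ≤ M) (hN : 1 ≤ N) :
    ((2 ^ N * X + Y : ℤ) : ℚ) - ((2 ^ M * Y + X : ℤ) : ℚ)
      = ((2:ℚ) ^ M - 1) * ((2:ℚ) ^ N - 1) * (lam M X - lam N Y) := by
  rw [castX X Y hM hN, castX Y X hN hM]
  ring

lemma transpose_ne {M N : ℕ} {X Y : ℤ} (hM : 1 ≤ M) (hN : 1 ≤ N)
    (h : lam M X ≠ lam N Y) : 2 ^ N * X + Y ≠ 2 ^ M * Y + X := by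
  intro he
  apply h
  have h2 := idt X Y hM hN
  rw [he, sub_self] at h2
  have := mul_ne_zero (pow_sub_one_ne hM) (pow_sub_one_ne hN)
  have h3 := (mul_eq_zero.mp h2.symm).resolve_left this
  linarith [h3]

lemma transpose_eq {M N : ℕ} {X Y : ℤ} (hM : 1 ≤ M) (hN : 1 ≤ N)
    (h : 2 ^ N * X + Y = 2 ^ M * Y + X) : lam M X = lam N Y := by
  by_contra hne
  exact transpose_ne hM hN hne h

lemma const_cast {M N : ℕ} {X Y : ℤ} {cc : ℚ} (hM : 1 ≤ M) (hN : 1 ≤ N)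
    (h1 : lam M X = cc) (h2 : lam N Y = cc) :
    ((2 ^ N * X + Y : ℤ) : ℚ) = ((2:ℚ) ^ (M + N) - 1) * cc := by
  rw [castX X Y hM hN, h1, h2]
  ring

lemma pow_lt_pow_q {N v : ℕ} (h : N < v) : (2:ℚ) ^ N < 2 ^ v :=
  pow_lt_pow_right₀ one_lt_two h

/-- mixed pair (first coordinate off the constant) vs constant pair at the same level -/
lemma mixed_ne {M N K L : ℕ} {X Y X' Y' : ℤ} {cc : ℚ}
    (hM : 1 ≤ M) (hN : 1 ≤ N) (hK : 1 ≤ K) (hL : 1 ≤ L)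
    (hlevel : M + N = K + L)
    (hXc : lam M X ≠ cc) (hYc : lam N Y = cc)
    (hKc : lam K X' = cc) (hLc : lam L Y' = cc) :
    2 ^ N * X + Y ≠ 2 ^ L * X' + Y' := by
  intro he
  apply hXc
  have h1 := castX X Y hM hN
  have h2 := const_cast hK hL hKc hLc
  rw [he, h2, hYc, ← hlevel] at h1
  have hpos : (2:ℚ) ^ (M + N) - 2 ^ N ≠ 0 := by
    have := pow_lt_pow_q (show N < M + N by omega); linarith
  have : ((2:ℚ) ^ (M + N) - 2 ^ N) * lam M X = ((2:ℚ) ^ (M + N) - 2 ^ N) * cc := by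
    linarith
  exact mul_left_cancel₀ hpos this

/-- mixed pair (second coordinate off the constant) vs constant pair at the same level -/
lemma mixed_ne' {M N K L : ℕ} {X Y X' Y' : ℤ} {cc : ℚ}
    (hM : 1 ≤ M) (hN : 1 ≤ N) (hK : 1 ≤ K) (hL : 1 ≤ L)
    (hlevel : M + N = K + L)
    (hXc : lam M X = cc) (hYc : lam N Y ≠ cc)
    (hKc : lam K X' = cc) (hLc : lam L Y' = cc) :
    2 ^ N * X + Y ≠ 2 ^ L * X' + Y' := by
  intro he
  apply hYc
  have h1 := castX X Y hM hN
  have h2 := const_cast hK hL hKc hLc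
  rw [he, h2, hXc, ← hlevel] at h1
  have hpos : (2:ℚ) ^ N - 1 ≠ 0 := pow_sub_one_ne hN
  have : ((2:ℚ) ^ N - 1) * lam N Y = ((2:ℚ) ^ N - 1) * cc := by linarith
  exact mul_left_cancel₀ hpos this

lemma transpose_eq' {M N : ℕ} {X Y : ℤ} (hM : 1 ≤ M) (hN : 1 ≤ N)
    (h : lam M X = lam N Y) : 2 ^ N * X + Y = 2 ^ M * Y + X := by
  have h2 := idt X Y hM hN
  rw [h, sub_self, mul_zero] at h2
  have h3 : ((2 ^ N * X + Y : ℤ) : ℚ) = ((2 ^ M * Y + X : ℤ) : ℚ) := by linarith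
  exact_mod_cast h3

lemma ne_of_fst {α β : Type*} {a b : α × β} (h : a.1 ≠ b.1) : a ≠ b :=
  fun he => h (congrArg Prod.fst he)


lemma card_four {a b c d : ℕ × ℤ} (h1 : a≠b) (h2 : a≠c) (h3 : a≠d) (h4 : b≠c) (h5 : b≠d)
    (h6 : c≠d) : ({a,b,c,d} : Finset (ℕ×ℤ)).card = 4 := by
  rw [Finset.card_insert_of_notMem (by simp [h1,h2,h3]),
    Finset.card_insert_of_notMem (by simp [h4,h5]),
    Finset.card_insert_of_notMem (by simp [h6]), Finset.card_singleton]

def prodF {t : ℕ} (m : Fin t → ℕ) (x : Fin t → ℤ) : Fin t × Fin t → ℕ × ℤ :=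
  fun p => (m p.1 + m p.2, 2 ^ m p.2 * x p.1 + x p.2)

theorem core (t : ℕ) (ht : 2 ≤ t) : ∀ (m : Fin t → ℕ) (x : Fin t → ℤ),
    StrictMono m → (∀ i, 1 ≤ m i) →
    (∃ i j, 2 ^ m j * x i + x j ≠ 2 ^ m i * x j + x i) →
    4 * t - 4 ≤ (Finset.image (prodF m x) Finset.univ).card := by
  induction t, ht using Nat.le_induction with
  | base =>
    intro m x hmono hm1 hne
    have h01 : (0 : Fin 2) < 1 := by decide
    have hm01 : m 0 < m 1 := hmono h01
    have hL : lam (m 0) (x 0) ≠ lam (m 1) (x 1) := by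
      obtain ⟨i, j, hij⟩ := hne
      have hij' : i ≠ j := by rintro rfl; exact hij rfl
      intro hLeq
      fin_cases i <;> fin_cases j <;> simp_all
      · exact hij (transpose_eq' hm1.1 hm1.2 hLeq)
      · exact hij (transpose_eq' hm1.2 hm1.1 hLeq.symm)
    have : (Finset.univ : Finset (Fin 2 × Fin 2)).card ≤
        (Finset.image (prodF m x) Finset.univ).card := by
      apply Finset.card_le_card_of_injOn
      · exact fun p _ => Finset.mem_image_of_mem _ (Finset.mem_univ p)
      · rintro ⟨p1, p2⟩ - ⟨q1, q2⟩ - h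
        have h1 := congrArg Prod.fst h
        have h2 := congrArg Prod.snd h
        simp only [prodF] at h1 h2
        fin_cases p1 <;> fin_cases p2 <;> fin_cases q1 <;> fin_cases q2 <;> simp_all
        all_goals first
          | omega
          | exact transpose_ne (hm1 0) (hm1 1) hL h2
          | exact transpose_ne (hm1 0) (hm1 1) hL h2.symm
    simpa using this
  | succ n hn IH =>
    intro m x hmono hm1 hne
    classical
    obtain ⟨c, hcdef⟩ : ∃ c : Fin n → Fin (n+1), c = Fin.castSucc := ⟨_, rfl⟩
    obtain ⟨iT, hiTdef⟩ : ∃ iT : Fin (n+1), iT = Fin.last n := ⟨_, rfl⟩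
    obtain ⟨jP, hjPdef⟩ : ∃ jP : Fin n, jP = ⟨n-1, by omega⟩ := ⟨_, rfl⟩
    obtain ⟨jQ, hjQdef⟩ : ∃ jQ : Fin n, jQ = ⟨n-2, by omega⟩ := ⟨_, rfl⟩
    obtain ⟨L, hLdef⟩ : ∃ L : Fin (n+1) → ℚ, L = fun i => lam (m i) (x i) := ⟨_, rfl⟩
    have hcval : ∀ j : Fin n, (c j).val = j.val := by intro j; rw [hcdef]; simp
    have hcinj : Function.Injective c := by
      intro a b h; rw [hcdef] at h; exact Fin.castSucc_injective n h
    have hltT : ∀ j : Fin n, m (c j) < m iT := by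
      intro j; apply hmono; rw [hcdef, hiTdef]; exact Fin.castSucc_lt_last j
    have hleP : ∀ j : Fin n, m (c j) ≤ m (c jP) := by
      intro j
      apply hmono.monotone
      rw [Fin.le_def, hcval, hcval, hjPdef]
      show j.val ≤ n - 1
      have := j.isLt
      omega
    have hQP : m (c jQ) < m (c jP) := by
      apply hmono
      rw [Fin.lt_def, hcval, hcval, hjPdef, hjQdef]
      show n - 2 < n - 1
      omega
    have hfact : ∀ p : Fin n × Fin n,
        prodF (fun k => m (c k)) (fun k => x (c k)) p = prodF m x (c p.1, c p.2) :=
      fun p => rfl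
    have hlevglobal : ∀ p : Fin (n+1) × Fin (n+1),
        (prodF m x p).1 = m p.1 + m p.2 := fun p => rfl
    have hsub : Finset.image (prodF (fun k => m (c k)) (fun k => x (c k))) Finset.univ ⊆
        Finset.image (prodF m x) Finset.univ := by
      intro e he
      obtain ⟨p, -, rfl⟩ := Finset.mem_image.mp he
      rw [hfact]
      exact Finset.mem_image_of_mem _ (Finset.mem_univ _)
    have hlevel' : ∀ e ∈ Finset.image (prodF (fun k => m (c k)) (fun k => x (c k))) Finset.univ,
        e.1 ≤ 2 * m (c jP) := by
      intro e he
      obtain ⟨p, -, rfl⟩ := Finset.mem_image.mp he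
      have h1 := hleP p.1
      have h2 := hleP p.2
      show m (c p.1) + m (c p.2) ≤ 2 * m (c jP)
      omega
    have hnotP' : ∀ e : ℕ × ℤ, 2 * m (c jP) < e.1 →
        e ∉ Finset.image (prodF (fun k => m (c k)) (fun k => x (c k))) Finset.univ :=
      fun e h he => absurd (hlevel' e he) (by omega)
    have hsqueeze : ∀ (k : Fin n) (p : Fin n × Fin n),
        m (c p.1) + m (c p.2) = m (c k) + m iT → k < p.1 ∧ k < p.2 := by
      intro k p hl
      have h1 := hleP p.1
      have h2 := hleP p.2
      have h3 := hltT jP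
      constructor
      · have hm' : m (c k) < m (c p.1) := by omega
        have := hmono.lt_iff_lt.mp hm'
        rwa [hcdef, Fin.castSucc_lt_castSucc_iff] at this
      · have hm' : m (c k) < m (c p.2) := by omega
        have := hmono.lt_iff_lt.mp hm'
        rwa [hcdef, Fin.castSucc_lt_castSucc_iff] at this
    by_cases hconst : ∀ i j : Fin n, L (c i) = L (c j)
    · -- CASE 2 : constant on the first n indices
      obtain ⟨cc, hccdef⟩ : ∃ cc : ℚ, cc = L (c jP) := ⟨_, rfl⟩
      have hcc : ∀ k : Fin n, L (c k) = cc := fun k => by rw [hccdef]; exact hconst k jP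
      have hT : L iT ≠ cc := by
        obtain ⟨i, j, hij⟩ := hne
        have hLij : L i ≠ L j := by
          intro h
          apply hij
          apply transpose_eq' (hm1 i) (hm1 j)
          rw [hLdef] at h
          exact h
        rcases Fin.eq_castSucc_or_eq_last i with ⟨i', rfl⟩ | rfl
        · rcases Fin.eq_castSucc_or_eq_last j with ⟨j', rfl⟩ | rfl
          · exfalso
            apply hLij
            rw [show Fin.castSucc i' = c i' from by rw [hcdef], show Fin.castSucc j' = c j' from by rw [hcdef],
              hcc i', hcc j']
          · intro h
            apply hLij
            rw [show Fin.castSucc i' = c i' from by rw [hcdef], hcc i', show Fin.last n = iT from hiTdef.symm, h]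
        · rcases Fin.eq_castSucc_or_eq_last j with ⟨j', rfl⟩ | rfl
          · intro h
            apply hLij
            rw [show Fin.castSucc j' = c j' from by rw [hcdef], hcc j', show Fin.last n = iT from hiTdef.symm, h]
          · exact absurd rfl hLij
      have hmvc : ∀ (k : Fin n) (i j : Fin (n+1)), L i = cc → L j = cc →
          prodF m x (c k, iT) ≠ prodF m x (i, j) := by
        intro k i j hi hj h
        have hlvl : m (c k) + m iT = m i + m j := congrArg Prod.fst h
        have hval : (2:ℤ) ^ m iT * x (c k) + x iT = 2 ^ m j * x i + x j := congrArg Prod.snd h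
        rw [hLdef] at hi hj hT
        have hk := hcc k
        rw [hLdef] at hk
        exact mixed_ne' (hm1 (c k)) (hm1 iT) (hm1 i) (hm1 j) hlvl hk hT hi hj hval
      have hmvc' : ∀ (k : Fin n) (i j : Fin (n+1)), L i = cc → L j = cc →
          prodF m x (iT, c k) ≠ prodF m x (i, j) := by
        intro k i j hi hj h
        have hlvl : m iT + m (c k) = m i + m j := congrArg Prod.fst h
        have hval : (2:ℤ) ^ m (c k) * x iT + x (c k) = 2 ^ m j * x i + x j := congrArg Prod.snd h
        rw [hLdef] at hi hj hT
        have hk := hcc k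
        rw [hLdef] at hk
        exact mixed_ne (hm1 iT) (hm1 (c k)) (hm1 i) (hm1 j) hlvl hT hk hi hj hval
      obtain ⟨j0, hj0def⟩ : ∃ j0 : Fin n, j0 = ⟨0, by omega⟩ := ⟨_, rfl⟩
      -- the witness set
      obtain ⟨D1, hD1⟩ : ∃ D1, D1 = Finset.univ.image (fun j : Fin n => (c j0, c j)) := ⟨_, rfl⟩
      obtain ⟨D2, hD2⟩ : ∃ D2, D2 = (Finset.univ.erase j0).image (fun j : Fin n => (c j, c jP)) := ⟨_, rfl⟩
      obtain ⟨D3, hD3⟩ : ∃ D3, D3 = Finset.univ.image (fun k : Fin n => (c k, iT)) := ⟨_, rfl⟩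
      obtain ⟨D4, hD4⟩ : ∃ D4, D4 = Finset.univ.image (fun k : Fin n => (iT, c k)) := ⟨_, rfl⟩
      obtain ⟨D5, hD5⟩ : ∃ D5 : Finset (Fin (n+1) × Fin (n+1)), D5 = {(iT, iT)} := ⟨_, rfl⟩
      have hcneT : ∀ j : Fin n, c j ≠ iT := by
        intro j
        rw [hcdef, hiTdef]
        exact Fin.ne_of_lt (Fin.castSucc_lt_last j)
      have hD1card : D1.card = n := by
        rw [hD1, Finset.card_image_of_injective _ (fun a b h => hcinj (congrArg Prod.snd h))]
        simp
      have hD2card : D2.card = n - 1 := by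
        rw [hD2, Finset.card_image_of_injective _ (fun a b h => hcinj (congrArg Prod.fst h)),
          Finset.card_erase_of_mem (Finset.mem_univ j0)]
        simp
      have hD3card : D3.card = n := by
        rw [hD3, Finset.card_image_of_injective _ (fun a b h => hcinj (congrArg Prod.fst h))]
        simp
      have hD4card : D4.card = n := by
        rw [hD4, Finset.card_image_of_injective _ (fun a b h => hcinj (congrArg Prod.snd h))]
        simp
      have hD5card : D5.card = 1 := by rw [hD5]; rfl
      have hd12 : Disjoint D1 D2 := by
        rw [hD1, hD2, Finset.disjoint_left]
        rintro a ha hb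
        simp only [Finset.mem_image, Finset.mem_univ, true_and, Finset.mem_erase] at ha hb
        obtain ⟨j1, rfl⟩ := ha
        obtain ⟨j2, ⟨hj2, -⟩, heq⟩ := hb
        exact hj2 (hcinj (congrArg Prod.fst heq))
      have hd123 : Disjoint (D1 ∪ D2) D3 := by
        rw [hD1, hD2, hD3, Finset.disjoint_left]
        rintro a ha hb
        simp only [Finset.mem_union, Finset.mem_image, Finset.mem_univ, true_and,
          Finset.mem_erase] at ha hb
        obtain ⟨k, hk⟩ := hb
        rcases ha with ⟨j1, rfl⟩ | ⟨j1, -, rfl⟩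
        · exact hcneT j1 (congrArg Prod.snd hk).symm
        · exact hcneT jP (congrArg Prod.snd hk).symm
      have hd1234 : Disjoint (D1 ∪ D2 ∪ D3) D4 := by
        rw [hD1, hD2, hD3, hD4, Finset.disjoint_left]
        rintro a ha hb
        simp only [Finset.mem_union, Finset.mem_image, Finset.mem_univ, true_and,
          Finset.mem_erase] at ha hb
        obtain ⟨k, hk⟩ := hb
        rcases ha with (⟨j1, rfl⟩ | ⟨j1, -, rfl⟩) | ⟨j1, rfl⟩
        · exact hcneT j0 (congrArg Prod.fst hk).symm
        · exact hcneT j1 (congrArg Prod.fst hk).symm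
        · exact hcneT j1 (congrArg Prod.fst hk).symm
      have hd12345 : Disjoint (D1 ∪ D2 ∪ D3 ∪ D4) D5 := by
        rw [hD1, hD2, hD3, hD4, hD5, Finset.disjoint_left]
        rintro a ha hb
        simp only [Finset.mem_union, Finset.mem_image, Finset.mem_univ, true_and,
          Finset.mem_erase, Finset.mem_singleton] at ha hb
        subst hb
        rcases ha with ((⟨j1, hj⟩ | ⟨j1, -, hj⟩) | ⟨j1, hj⟩) | ⟨j1, hj⟩
        · exact hcneT j0 (congrArg Prod.fst hj)
        · exact hcneT j1 (congrArg Prod.fst hj)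
        · exact hcneT j1 (congrArg Prod.fst hj)
        · exact hcneT j1 (congrArg Prod.snd hj)
      have hDcard : (D1 ∪ D2 ∪ D3 ∪ D4 ∪ D5).card = 4 * n := by
        rw [Finset.card_union_of_disjoint hd12345, Finset.card_union_of_disjoint hd1234,
          Finset.card_union_of_disjoint hd123, Finset.card_union_of_disjoint hd12,
          hD1card, hD2card, hD3card, hD4card, hD5card]
        omega
      have hinj : Set.InjOn (prodF m x) ↑(D1 ∪ D2 ∪ D3 ∪ D4 ∪ D5) := by
        intro p hp q hq heq
        rw [Finset.mem_coe] at hp hq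
        rw [hD1, hD2, hD3, hD4, hD5] at hp hq
        simp only [Finset.mem_union, Finset.mem_image, Finset.mem_univ, true_and,
          Finset.mem_erase, Finset.mem_singleton] at hp hq
        have hlv : m p.1 + m p.2 = m q.1 + m q.2 := congrArg Prod.fst heq
        rcases hp with (((⟨j1, rfl⟩ | ⟨j1, ⟨hj1, -⟩, rfl⟩) | ⟨k1, rfl⟩) | ⟨k1, rfl⟩) | rfl <;>
          rcases hq with (((⟨j2, rfl⟩ | ⟨j2, ⟨hj2, -⟩, rfl⟩) | ⟨k2, rfl⟩) | ⟨k2, rfl⟩) | rfl <;>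
          simp only at hlv
        -- (1,1)
        · have : c j1 = c j2 := hmono.injective (by omega)
          rw [this]
        -- (1,2)
        · exfalso
          have h1 := hleP j1
          have h2 : m (c j2) ≤ m (c j0) := by omega
          have h3 : j2 ≤ j0 := by
            have := hmono.le_iff_le.mp h2
            rw [hcdef, Fin.castSucc_le_castSucc_iff] at this
            exact this
          apply hj2
          apply Fin.ext
          rw [Fin.le_def, hj0def] at h3
          rw [hj0def]
          show j2.val = 0
          change j2.val ≤ 0 at h3
          omega
        -- (1,3)
        · exact absurd heq.symm (hmvc k2 _ _ (hcc j0) (hcc j1))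
        -- (1,4)
        · exact absurd heq.symm (hmvc' k2 _ _ (hcc j0) (hcc j1))
        -- (1,5)
        · exfalso
          have h1 := hltT j0
          have h2 := hltT j1
          omega
        -- (2,1)
        · exfalso
          have h1 := hleP j2
          have h2 : m (c j1) ≤ m (c j0) := by omega
          have h3 : j1 ≤ j0 := by
            have := hmono.le_iff_le.mp h2
            rw [hcdef, Fin.castSucc_le_castSucc_iff] at this
            exact this
          apply hj1
          apply Fin.ext
          rw [Fin.le_def, hj0def] at h3
          rw [hj0def]
          show j1.val = 0
          change j1.val ≤ 0 at h3
          omega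
        -- (2,2)
        · have : c j1 = c j2 := hmono.injective (by omega)
          rw [this]
        -- (2,3)
        · exact absurd heq.symm (hmvc k2 _ _ (hcc j1) (hcc jP))
        -- (2,4)
        · exact absurd heq.symm (hmvc' k2 _ _ (hcc j1) (hcc jP))
        -- (2,5)
        · exfalso
          have h1 := hltT j1
          have h2 := hltT jP
          omega
        -- (3,1)
        · exact absurd heq (hmvc k1 _ _ (hcc j0) (hcc j2))
        -- (3,2)
        · exact absurd heq (hmvc k1 _ _ (hcc j2) (hcc jP))
        -- (3,3)
        · have : c k1 = c k2 := hmono.injective (by omega)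
          rw [this]
        -- (3,4)
        · exfalso
          have hkk : c k1 = c k2 := hmono.injective (by omega)
          have hv : (2:ℤ) ^ m iT * x (c k1) + x iT = 2 ^ m (c k2) * x iT + x (c k2) :=
            congrArg Prod.snd heq
          rw [← hkk] at hv
          have h5 : L (c k1) = L iT := by
            rw [hLdef]
            exact transpose_eq (hm1 (c k1)) (hm1 iT) hv
          exact hT (h5.symm.trans (hcc k1))
        -- (3,5)
        · exfalso
          have h1 := hltT k1
          omega
        -- (4,1)
        · exact absurd heq (hmvc' k1 _ _ (hcc j0) (hcc j2))
        -- (4,2)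
        · exact absurd heq (hmvc' k1 _ _ (hcc j2) (hcc jP))
        -- (4,3)
        · exfalso
          have hkk : c k1 = c k2 := hmono.injective (by omega)
          have hv : (2:ℤ) ^ m (c k1) * x iT + x (c k1) = 2 ^ m iT * x (c k2) + x iT :=
            congrArg Prod.snd heq
          rw [← hkk] at hv
          have h5 : L (c k1) = L iT := by
            rw [hLdef]
            exact transpose_eq (hm1 (c k1)) (hm1 iT) hv.symm
          exact hT (h5.symm.trans (hcc k1))
        -- (4,4)
        · have : c k1 = c k2 := hmono.injective (by omega)
          rw [this]
        -- (4,5)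
        · exfalso
          have h1 := hltT k1
          omega
        -- (5,1)
        · exfalso
          have h1 := hltT j0
          have h2 := hltT j2
          omega
        -- (5,2)
        · exfalso
          have h1 := hltT j2
          have h2 := hltT jP
          omega
        -- (5,3)
        · exfalso
          have h1 := hltT k2
          omega
        -- (5,4)
        · exfalso
          have h1 := hltT k2
          omega
        -- (5,5)
        · rfl
      have hfinal := Finset.card_le_card_of_injOn (prodF m x)
        (fun p _ => Finset.mem_image_of_mem _ (Finset.mem_univ p)) hinj
      rw [hDcard] at hfinal
      omega
    · -- CASE 1 : induction
      push_neg at hconst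
      obtain ⟨i0, j0, hij0⟩ := hconst
      have hm'mono : StrictMono (fun k : Fin n => m (c k)) := by
        intro a b hab
        apply hmono
        rw [hcdef, Fin.castSucc_lt_castSucc_iff]
        exact hab
      have hneX : ∃ i j : Fin n, 2 ^ m (c j) * x (c i) + x (c j) ≠ 2 ^ m (c i) * x (c j) + x (c i) := by
        refine ⟨i0, j0, ?_⟩
        apply transpose_ne (hm1 _) (hm1 _)
        rw [hLdef] at hij0
        exact hij0
      have hIH := IH (fun k => m (c k)) (fun k => x (c k)) hm'mono (fun i => hm1 _) hneX
      have main : ∀ E : Finset (ℕ × ℤ), E.card = 4 →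
          E ⊆ Finset.image (prodF m x) Finset.univ →
          (∀ e ∈ E, e ∉ Finset.image (prodF (fun k => m (c k)) (fun k => x (c k))) Finset.univ) →
          4 * (n+1) - 4 ≤ (Finset.image (prodF m x) Finset.univ).card := by
        intro E hEcard hEP hEd
        have hdisj : Disjoint E (Finset.image (prodF (fun k => m (c k)) (fun k => x (c k))) Finset.univ) :=
          Finset.disjoint_left.mpr (fun a ha hb => hEd a ha hb)
        have hunion := Finset.card_le_card (Finset.union_subset hEP hsub)
        rw [Finset.card_union_of_disjoint hdisj, hEcard] at hunion
        omega
      have hPmT : m (c jP) < m iT := hltT jP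
      by_cases hPT : L (c jP) = L iT
      · -- CASE 1b
        obtain ⟨K, hKdef⟩ : ∃ K : Finset (Fin n), K = Finset.univ.filter (fun k => L (c k) ≠ L iT) :=
          ⟨_, rfl⟩
        have hKne : K.Nonempty := by
          by_cases h0 : L (c i0) = L iT
          · refine ⟨j0, ?_⟩
            rw [hKdef]
            simp only [Finset.mem_filter, Finset.mem_univ, true_and]
            intro h
            exact hij0 (h0.trans h.symm)
          · refine ⟨i0, ?_⟩
            rw [hKdef]
            simp only [Finset.mem_filter, Finset.mem_univ, true_and]
            exact h0
        obtain ⟨k0, hk0def⟩ : ∃ k0, k0 = K.max' hKne := ⟨_, rfl⟩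
        have hk0 : L (c k0) ≠ L iT := by
          have := K.max'_mem hKne
          rw [← hk0def, hKdef] at this
          exact (Finset.mem_filter.mp this).2
        have hmax : ∀ j : Fin n, k0 < j → L (c j) = L iT := by
          intro j hj
          by_contra h
          have hjK : j ∈ K := by rw [hKdef]; simp only [Finset.mem_filter, Finset.mem_univ, true_and]; exact h
          have := K.le_max' j hjK
          rw [← hk0def] at this
          exact absurd this (not_le.mpr hj)
        have hk0P : k0 < jP := by
          have h1 : k0 ≠ jP := by
            intro h
            apply hk0
            rw [h]
            exact hPT
          rw [Fin.lt_def, hjPdef]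
          have h3 := k0.isLt
          have h2 : k0.val ≠ n - 1 := by
            intro h
            apply h1
            apply Fin.ext
            rw [hjPdef, h]
          show k0.val < n - 1
          omega
        have hmk0P : m (c k0) < m (c jP) := by
          apply hmono
          rw [hcdef, Fin.castSucc_lt_castSucc_iff]
          exact hk0P
        -- the four new elements
        apply main {prodF m x (c jP, iT), prodF m x (iT, iT),
                    prodF m x (c k0, iT), prodF m x (iT, c k0)}
        · apply card_four
          · apply ne_of_fst; show m (c jP) + m iT ≠ m iT + m iT; omega
          · apply ne_of_fst; show m (c jP) + m iT ≠ m (c k0) + m iT; omega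
          · apply ne_of_fst; show m (c jP) + m iT ≠ m iT + m (c k0); omega
          · apply ne_of_fst; show m iT + m iT ≠ m (c k0) + m iT; omega
          · apply ne_of_fst; show m iT + m iT ≠ m iT + m (c k0); omega
          · intro h
            have hv := congrArg Prod.snd h
            apply transpose_ne (hm1 (c k0)) (hm1 iT) _ hv
            rw [hLdef] at hk0
            exact hk0
        · simp only [Finset.insert_subset_iff, Finset.singleton_subset_iff]
          exact ⟨Finset.mem_image_of_mem _ (Finset.mem_univ _),
                 Finset.mem_image_of_mem _ (Finset.mem_univ _),
                 Finset.mem_image_of_mem _ (Finset.mem_univ _),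
                 Finset.mem_image_of_mem _ (Finset.mem_univ _)⟩
        · intro e he
          simp only [Finset.mem_insert, Finset.mem_singleton] at he
          rcases he with rfl | rfl | rfl | rfl
          · exact hnotP' _ (by show 2*m (c jP) < m (c jP) + m iT; omega)
          · exact hnotP' _ (by show 2*m (c jP) < m iT + m iT; omega)
          · -- e3 = prodF (c k0, iT)
            intro he
            obtain ⟨p, -, hpe⟩ := Finset.mem_image.mp he
            have hl : m (c p.1) + m (c p.2) = m (c k0) + m iT := congrArg Prod.fst hpe
            obtain ⟨hs1, hs2⟩ := hsqueeze k0 p hl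
            have hL1 : L (c p.1) = L iT := hmax p.1 hs1
            have hL2 : L (c p.2) = L iT := hmax p.2 hs2
            have hv : 2 ^ m (c p.2) * x (c p.1) + x (c p.2) = 2 ^ m iT * x (c k0) + x iT :=
              congrArg Prod.snd hpe
            rw [hLdef] at hL1 hL2 hk0
            exact mixed_ne (hm1 (c k0)) (hm1 iT) (hm1 (c p.1)) (hm1 (c p.2))
              hl.symm hk0 rfl hL1 hL2 hv.symm
          · -- e4 = prodF (iT, c k0)
            intro he
            obtain ⟨p, -, hpe⟩ := Finset.mem_image.mp he
            have hl : m (c p.1) + m (c p.2) = m iT + m (c k0) := congrArg Prod.fst hpe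
            have hl' : m (c p.1) + m (c p.2) = m (c k0) + m iT := by omega
            obtain ⟨hs1, hs2⟩ := hsqueeze k0 p hl'
            have hL1 : L (c p.1) = L iT := hmax p.1 hs1
            have hL2 : L (c p.2) = L iT := hmax p.2 hs2
            have hv : 2 ^ m (c p.2) * x (c p.1) + x (c p.2) = 2 ^ m (c k0) * x iT + x (c k0) :=
              congrArg Prod.snd hpe
            rw [hLdef] at hL1 hL2 hk0
            exact mixed_ne' (hm1 iT) (hm1 (c k0)) (hm1 (c p.1)) (hm1 (c p.2))
              hl.symm rfl hk0 hL1 hL2 hv.symm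
      · -- CASE 1a
        have e1e2 : prodF m x (c jP, iT) ≠ prodF m x (iT, c jP) := by
          intro h
          have hv := congrArg Prod.snd h
          apply transpose_ne (hm1 (c jP)) (hm1 iT) _ hv
          rw [hLdef] at hPT
          exact hPT
        have h34 : prodF m x (c jQ, iT) ≠ prodF m x (c jP, c jP) ∨
            prodF m x (iT, c jQ) ≠ prodF m x (c jP, c jP) := by
          by_contra hcon
          push_neg at hcon
          obtain ⟨ha, hb⟩ := hcon
          have hv := ha.trans hb.symm
          have hQT : lam (m (c jQ)) (x (c jQ)) = lam (m iT) (x iT) :=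
            transpose_eq (hm1 (c jQ)) (hm1 iT) (congrArg Prod.snd hv)
          have hlvl : m (c jQ) + m iT = m (c jP) + m (c jP) := congrArg Prod.fst ha
          have hvala : (2:ℤ) ^ m iT * x (c jQ) + x iT = 2 ^ m (c jP) * x (c jP) + x (c jP) :=
            congrArg Prod.snd ha
          have hLc := const_cast (hm1 (c jQ)) (hm1 iT) hQT rfl
          have hRc := const_cast (hm1 (c jP)) (hm1 (c jP)) (rfl : lam (m (c jP)) (x (c jP)) = _) rfl
          rw [hvala] at hLc
          rw [hlvl] at hLc
          have hfac : ((2:ℚ) ^ (m (c jP) + m (c jP)) - 1) ≠ 0 := pow_sub_one_ne (by have := hm1 (c jP); omega)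
          have := mul_left_cancel₀ hfac (hLc.symm.trans hRc)
          apply hPT
          rw [hLdef]
          exact this.symm
        obtain ⟨p4, hp4lvl, hp4ne⟩ : ∃ p4 : Fin (n+1) × Fin (n+1),
            (prodF m x p4).1 = m (c jQ) + m iT ∧ prodF m x p4 ≠ prodF m x (c jP, c jP) := by
          rcases h34 with h4 | h4
          · exact ⟨(c jQ, iT), rfl, h4⟩
          · exact ⟨(iT, c jQ), by show m iT + m (c jQ) = _; omega, h4⟩
        apply main {prodF m x (c jP, iT), prodF m x (iT, c jP),
                    prodF m x (iT, iT), prodF m x p4}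
        · apply card_four
          · exact e1e2
          · apply ne_of_fst; show m (c jP) + m iT ≠ m iT + m iT; omega
          · apply ne_of_fst; rw [hp4lvl]; show m (c jP) + m iT ≠ m (c jQ) + m iT; omega
          · apply ne_of_fst; show m iT + m (c jP) ≠ m iT + m iT; omega
          · apply ne_of_fst; rw [hp4lvl]; show m iT + m (c jP) ≠ m (c jQ) + m iT; omega
          · apply ne_of_fst; rw [hp4lvl]; show m iT + m iT ≠ m (c jQ) + m iT; omega
        · simp only [Finset.insert_subset_iff, Finset.singleton_subset_iff]
          exact ⟨Finset.mem_image_of_mem _ (Finset.mem_univ _),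
                 Finset.mem_image_of_mem _ (Finset.mem_univ _),
                 Finset.mem_image_of_mem _ (Finset.mem_univ _),
                 Finset.mem_image_of_mem _ (Finset.mem_univ _)⟩
        · intro e he
          simp only [Finset.mem_insert, Finset.mem_singleton] at he
          rcases he with rfl | rfl | rfl | rfl
          · exact hnotP' _ (by show 2*m (c jP) < m (c jP) + m iT; omega)
          · exact hnotP' _ (by show 2*m (c jP) < m iT + m (c jP); omega)
          · exact hnotP' _ (by show 2*m (c jP) < m iT + m iT; omega)
          · intro he
            obtain ⟨p, -, hpe⟩ := Finset.mem_image.mp he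
            have hl : m (c p.1) + m (c p.2) = m (c jQ) + m iT :=
              (congrArg Prod.fst hpe).trans hp4lvl
            obtain ⟨hs1, hs2⟩ := hsqueeze jQ p hl
            have hp1 : p.1 = jP := by
              apply Fin.ext
              rw [Fin.lt_def, hjQdef] at hs1
              have h5 := p.1.isLt
              rw [hjPdef]
              change n - 2 < _ at hs1
              show _ = n - 1
              omega
            have hp2 : p.2 = jP := by
              apply Fin.ext
              rw [Fin.lt_def, hjQdef] at hs2
              have h5 := p.2.isLt
              rw [hjPdef]
              change n - 2 < _ at hs2
              show _ = n - 1
              omega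
            apply hp4ne
            rw [← hpe, hfact, hp1, hp2]

/-! main theorem -/

theorem stmt16 (t : ℕ) (ht : 2 ≤ t) (m : Fin t → ℕ) (x : Fin t → ℤ)
    (hmono : StrictMono m) (hm1 : ∀ i, 1 ≤ m i) (S : Finset (BS 2))
    (hS : S = Finset.univ.image (fun i => bsb 2 ^ m i * bsa 2 ^ x i))
    (hnab : ¬ IsMulCommutative (Subgroup.closure (S : Set (BS 2)))) :
    4 * (S.card : ℤ) - 4 ≤ ((S * S).card : ℤ) := by
  classical
  set s : Fin t → BS 2 := fun i => bsb 2 ^ m i * bsa 2 ^ x i with hs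
  have hne : ∃ i j, 2 ^ m j * x i + x j ≠ 2 ^ m i * x j + x i := by
    by_contra hcon
    push_neg at hcon
    apply hnab
    have hcomm : ∀ g1 ∈ (S : Set (BS 2)), ∀ g2 ∈ (S : Set (BS 2)), g1 * g2 = g2 * g1 := by
      intro g1 hg1 g2 hg2
      rw [hS] at hg1 hg2
      simp only [Finset.coe_image, Set.mem_image, Finset.mem_coe, Finset.coe_univ,
        Set.image_univ, Set.mem_range] at hg1 hg2
      obtain ⟨i, rfl⟩ := hg1
      obtain ⟨j, rfl⟩ := hg2
      rw [bs_normal_form, bs_normal_form, hcon i j, add_comm (m i) (m j)]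
    letI := Subgroup.closureCommGroupOfComm hcomm
    exact ⟨⟨fun a b => mul_comm a b⟩⟩
  have hScard : S.card ≤ t := by
    rw [hS]
    exact Finset.card_image_le.trans (by simp)
  have hSS : S * S = Finset.image (fun p : Fin t × Fin t => s p.1 * s p.2) Finset.univ := by
    rw [hS]
    ext g
    simp only [Finset.mem_mul, Finset.mem_image, Finset.mem_univ, true_and, Prod.exists]
    constructor
    · rintro ⟨u, ⟨i, rfl⟩, v, ⟨j, rfl⟩, rfl⟩
      exact ⟨i, j, rfl⟩
    · rintro ⟨i, j, rfl⟩
      exact ⟨s i, ⟨i, rfl⟩, s j, ⟨j, rfl⟩, rfl⟩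
  have key : ∀ p : Fin t × Fin t, bspsi (s p.1 * s p.2) = embNXQ (prodF m x p) := by
    intro p
    rw [hs]
    exact bspsi_prod _ _ _ _
  have h1 : (Finset.image (prodF m x) Finset.univ).card ≤ (S * S).card := by
    calc (Finset.image (prodF m x) Finset.univ).card
        = (Finset.image (embNXQ ∘ prodF m x) Finset.univ).card := by
          rw [← Finset.image_image, Finset.card_image_of_injective _ embNXQ_inj]
      _ = ((S * S).image bspsi).card := by
          rw [hSS, Finset.image_image]
          congr 1
          apply Finset.image_congr
          intro p _
          exact (key p).symm
      _ ≤ (S * S).card := Finset.card_image_le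
  have h2 := core t ht m x hmono hm1 hne
  have : 4 * t - 4 ≤ (S * S).card := le_trans h2 h1
  have h3 : 4 * S.card ≤ 4 * t := by omega
  omega
end

section
/- Let S ⊆ BS⁺(1,2) be finite, lying in at least two distinct cosets of ⟨a⟩, and suppose some coset bᵐ⟨a⟩ contains at least two elements of S. Then S generates a non-abelian group. -/
open Pointwise

noncomputable def bsf : Bool → Equiv.Perm ℚ := fun c =>
  if c then Equiv.addRight 1 else Equiv.mulRight₀ (1/2 : ℚ) (by norm_num)

lemma bsf_rel : ∀ r ∈ BSRel 2, FreeGroup.lift bsf r = 1 := by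
  rintro r hr
  rcases hr with rfl
  simp only [map_mul, map_inv, map_pow, FreeGroup.lift_apply_of]
  rw [mul_inv_eq_one]
  ext z
  simp [bsf, Equiv.Perm.mul_apply, pow_two]
  ring

noncomputable def φ : BS 2 →* Equiv.Perm ℚ := PresentedGroup.toGroup bsf_rel

lemma φa : φ (bsa 2) = Equiv.addRight 1 := by
  simp [φ, bsa, PresentedGroup.toGroup.of, bsf]

lemma φb : φ (bsb 2) = Equiv.mulRight₀ (1/2 : ℚ) (by norm_num) := by
  simp [φ, bsb, PresentedGroup.toGroup.of, bsf]

lemma φa_pow (k : ℤ) : ∀ z : ℚ, φ (bsa 2 ^ k) z = z + k := by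
  rw [map_zpow, φa]
  induction k using Int.induction_on with
  | zero => simp
  | succ i ih =>
      intro z
      rw [zpow_add_one, Equiv.Perm.mul_apply, zpow_natCast] at *
      simp only [Equiv.coe_addRight] at *
      rw [ih]
      push_cast; ring
  | pred i ih =>
      intro z
      rw [zpow_sub_one, Equiv.Perm.mul_apply] at *
      have h1 : ((Equiv.addRight (1:ℚ))⁻¹) z = z - 1 := by
        simp [Equiv.Perm.inv_def]
        ring
      rw [h1, ih]
      push_cast; ring

lemma φb_pow (m : ℕ) : ∀ z : ℚ, φ (bsb 2 ^ m) z = z * (1/2)^m := by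
  rw [map_pow, φb]
  induction m with
  | zero => simp
  | succ i ih =>
      intro z
      rw [pow_succ, Equiv.Perm.mul_apply, ih]
      simp [pow_succ]
      ring

theorem stmt19 (S : Finset (BS 2))
    (hpos : ∀ g ∈ S, ∃ (m : ℕ) (x : ℤ), g = bsb 2 ^ m * bsa 2 ^ x)
    (hcosets : ∃ s ∈ S, ∃ t ∈ S, s⁻¹ * t ∉ Subgroup.zpowers (bsa 2))
    (hrep : ∃ s ∈ S, ∃ t ∈ S, s ≠ t ∧ s⁻¹ * t ∈ Subgroup.zpowers (bsa 2)) :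
    ¬ IsMulCommutative (Subgroup.closure (S : Set (BS 2))) := by
  intro hcomm
  obtain ⟨s, hsS, t, htS, hst⟩ := hcosets
  obtain ⟨p, hpS, q, hqS, hpq, hmem⟩ := hrep
  obtain ⟨k, hk⟩ := Subgroup.mem_zpowers_iff.mp hmem
  have hk0 : k ≠ 0 := by
    rintro rfl
    rw [zpow_zero] at hk
    exact hpq (inv_mul_eq_one.mp hk.symm)
  obtain ⟨m, x, hsd⟩ := hpos s hsS
  obtain ⟨n, y, htd⟩ := hpos t htS
  haveI := hcomm
  have hcm : (bsa 2 ^ k) * (s⁻¹ * t) = (s⁻¹ * t) * (bsa 2 ^ k) := by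
    have h1 : bsa 2 ^ k ∈ Subgroup.closure (S : Set (BS 2)) := by
      rw [hk]
      exact mul_mem (inv_mem (Subgroup.subset_closure hpS)) (Subgroup.subset_closure hqS)
    have h2 : s⁻¹ * t ∈ Subgroup.closure (S : Set (BS 2)) :=
      mul_mem (inv_mem (Subgroup.subset_closure hsS)) (Subgroup.subset_closure htS)
    exact Subgroup.mul_comm_of_mem_isMulCommutative _ h1 h2
  have hφ := congrArg φ hcm
  simp only [map_mul, map_inv] at hφ
  have h0 := congrArg (fun σ : Equiv.Perm ℚ => (φ s) (σ 0)) hφ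
  simp only [Equiv.Perm.mul_apply] at h0
  rw [show ∀ (e : Equiv.Perm ℚ) (z : ℚ), e (e⁻¹ z) = z from fun e z => e.apply_symm_apply z] at h0
  set q0 : ℚ := (φ s)⁻¹ ((φ t) 0) with hq0def
  have hq0 : (φ s) q0 = (φ t) 0 := (φ s).apply_symm_apply _
  have evs : ∀ z : ℚ, (φ s) z = (z + x) * (1/2)^m := by
    intro z
    rw [hsd, map_mul, Equiv.Perm.mul_apply, φa_pow, φb_pow]
  have evt : ∀ z : ℚ, (φ t) z = (z + y) * (1/2)^n := by
    intro z
    rw [htd, map_mul, Equiv.Perm.mul_apply, φa_pow, φb_pow]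
  rw [φa_pow, φa_pow, evs, evt] at h0
  rw [evs, evt] at hq0
  have key : (k:ℚ) * (1/2)^m = k * (1/2)^n := by linear_combination h0 - hq0
  have hk0' : (k:ℚ) ≠ 0 := Int.cast_ne_zero.mpr hk0
  have hpow : ((1:ℚ)/2)^m = (1/2)^n := mul_left_cancel₀ hk0' key
  have hmn : m = n := by
    rw [div_pow, div_pow] at hpow
    field_simp at hpow
    norm_num at hpow
    omega
  apply hst
  rw [Subgroup.mem_zpowers_iff]
  refine ⟨y - x, ?_⟩
  rw [hsd, htd, hmn]
  group
end
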